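/- Let F : [0,∞) → [0,∞) be continuous and suppose the set of 1-quick points of F is dense in {x : F(x) > 0} and F has no a-quick points for a > 1. Let G : [0,∞) → [0,∞) be continuous with 0 ≤ G ≤ F, suppose F - G also has no a-quick points for a > 1, and fix x0 with G(x0) > 0 and F(x0) - G(x0) > 0. Then, by continuity, G > 0 and F - G > 0 on a neighborhood of x0, and in that neighborhood there exists a 1-quick point x of F which is a quick point of G. -/

import Mathlib

open Filter MeasureTheory Set
open scoped ENNReal

/-- `U h = sqrt (2 h log (1/h))`. -/
noncomputable def U (h : ℝ) : ℝ := Real.sqrt (2 * h * Real.log (1 / h))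

/-- `limsup_{h ↓ 0} |F (x+h) - F x| / U h`, valued in `ℝ≥0∞`. -/
noncomputable def fastLimsup (F : ℝ → ℝ) (x : ℝ) : ℝ≥0∞ :=
  Filter.limsup (fun h => ENNReal.ofReal (|F (x + h) - F x| / U h)) (nhdsWithin 0 (Set.Ioi 0))

/-- `x` is an `a`-quick point of the nonnegative function `H` :
`limsup_{h↓0} |H(x+h)-H(x)|/U(h) ≥ 2 a sqrt (H x) > 0`. -/
def QuickAt (H : ℝ → ℝ) (a x : ℝ) : Prop :=
  ENNReal.ofReal (2 * a * Real.sqrt (H x)) ≤ fastLimsup H x ∧ 0 < 2 * a * Real.sqrt (H x)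

lemma myLimsupAdd {ι : Type*} (u v : ι → ℝ≥0∞) (f : Filter ι) :
    limsup (u + v) f ≤ limsup u f + limsup v f := by
  rcases eq_top_or_lt_top (limsup u f) with hu | hu
  · simp [hu]
  rcases eq_top_or_lt_top (limsup v f) with hv | hv
  · simp [hv]
  refine ENNReal.le_of_forall_pos_le_add fun ε hε hlt => ?_
  have hu' : ∀ᶠ i in f, u i < limsup u f + ε / 2 :=
    eventually_lt_of_limsup_lt (by
      exact ENNReal.lt_add_right hu.ne (by simp [hε.ne', ENNReal.div_eq_zero_iff]))
  have hv' : ∀ᶠ i in f, v i < limsup v f + ε / 2 :=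
    eventually_lt_of_limsup_lt (by
      exact ENNReal.lt_add_right hv.ne (by simp [hε.ne', ENNReal.div_eq_zero_iff]))
  refine limsup_le_of_le (by isBoundedDefault) ?_
  filter_upwards [hu', hv'] with i h1 h2
  calc (u + v) i = u i + v i := rfl
    _ ≤ (limsup u f + ε / 2) + (limsup v f + ε / 2) := add_le_add h1.le h2.le
    _ = limsup u f + limsup v f + (ε / 2 + ε / 2) := by ring
    _ = limsup u f + limsup v f + ε := by rw [ENNReal.add_halves]

/-- Subadditivity of `fastLimsup` over a pointwise splitting `F = G + K`. -/
lemma fastLimsup_le_add (F G K : ℝ → ℝ) (hFGK : ∀ y, F y = G y + K y) (x : ℝ) :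
    fastLimsup F x ≤ fastLimsup G x + fastLimsup K x := by
  have key : ∀ h : ℝ, ENNReal.ofReal (|F (x + h) - F x| / U h) ≤
      ENNReal.ofReal (|G (x + h) - G x| / U h) + ENNReal.ofReal (|K (x + h) - K x| / U h) := by
    intro h
    have hU : 0 ≤ U h := Real.sqrt_nonneg _
    have tri : |F (x + h) - F x| ≤ |G (x + h) - G x| + |K (x + h) - K x| := by
      calc |F (x + h) - F x| = |(G (x + h) - G x) + (K (x + h) - K x)| := by
            rw [hFGK (x + h), hFGK x]; ring_nf
        _ ≤ _ := abs_add_le _ _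
    rw [← ENNReal.ofReal_add (div_nonneg (abs_nonneg _) hU) (div_nonneg (abs_nonneg _) hU),
      ← add_div]
    exact ENNReal.ofReal_le_ofReal (div_le_div_of_nonneg_right tri hU)
  calc fastLimsup F x ≤ Filter.limsup
        ((fun h => ENNReal.ofReal (|G (x + h) - G x| / U h)) +
         (fun h => ENNReal.ofReal (|K (x + h) - K x| / U h))) (nhdsWithin 0 (Set.Ioi 0)) :=
          limsup_le_limsup (Eventually.of_forall key)
    _ ≤ _ := myLimsupAdd _ _ _

/-- If `H` has no `a`-quick points for `a > 1` and `H x > 0`, then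
`fastLimsup H x ≤ 2 √(H x)`. -/
lemma fastLimsup_le_of_no_quick (H : ℝ → ℝ)
    (hHa : ∀ a : ℝ, 1 < a → ∀ x : ℝ, ¬ QuickAt H a x) (x : ℝ) (hx : 0 < H x) :
    fastLimsup H x ≤ ENNReal.ofReal (2 * Real.sqrt (H x)) := by
  by_contra hcon
  push_neg at hcon
  have hs : 0 < Real.sqrt (H x) := Real.sqrt_pos.mpr hx
  rcases eq_top_or_lt_top (fastLimsup H x) with htop | hfin
  · exact hHa 2 one_lt_two x ⟨by simp [htop], by positivity⟩
  · have hne : fastLimsup H x ≠ ⊤ := hfin.ne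
    set t : ℝ := (fastLimsup H x).toReal with ht
    have htlt : 2 * Real.sqrt (H x) < t := by
      rw [← ENNReal.ofReal_lt_iff_lt_toReal (by positivity) hne]
      exact hcon
    set a : ℝ := t / (2 * Real.sqrt (H x)) with ha
    have ha1 : 1 < a := (one_lt_div (by positivity)).mpr htlt
    have haeq : 2 * a * Real.sqrt (H x) = t := by
      field_simp [ha]
      rw [ha]; field_simp [hs.ne']
    exact hHa a ha1 x ⟨by rw [haeq, ht, ENNReal.ofReal_toReal hne], by
      rw [haeq]; exact lt_trans (by positivity) htlt⟩

theorem stmt_15 (F G : ℝ → ℝ) (hFc : Continuous F) (hGc : Continuous G)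
    (hFnn : ∀ x, 0 ≤ F x) (hGnn : ∀ x, 0 ≤ G x) (hGF : ∀ x, G x ≤ F x)
    (hdense : {x : ℝ | 0 < F x} ⊆ closure {x : ℝ | QuickAt F 1 x})
    (hFa : ∀ a : ℝ, 1 < a → ∀ x : ℝ, ¬ QuickAt F a x)
    (hFGa : ∀ a : ℝ, 1 < a → ∀ x : ℝ, ¬ QuickAt (F - G) a x)
    (x0 : ℝ) (h1 : 0 < G x0) (h2 : 0 < F x0 - G x0) :
    ∃ s : Set ℝ, s ∈ nhds x0 ∧ (∀ y ∈ s, 0 < G y ∧ 0 < F y - G y) ∧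
      ∃ x ∈ s, QuickAt F 1 x ∧ ∃ a : ℝ, 0 < a ∧ QuickAt G a x := by
  set s : Set ℝ := {y | 0 < G y ∧ 0 < F y - G y} with hsdef
  have hopen : IsOpen s := by
    have : s = {y | 0 < G y} ∩ {y | 0 < F y - G y} := rfl
    rw [this]
    exact (isOpen_lt continuous_const hGc).inter
      (isOpen_lt continuous_const (hFc.sub hGc))
  have hx0 : x0 ∈ s := ⟨h1, h2⟩
  have hmem : s ∈ nhds x0 := hopen.mem_nhds hx0
  refine ⟨s, hmem, fun y hy => hy, ?_⟩
  -- find a 1-quick point of F in s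
  have hFx0 : 0 < F x0 := lt_of_lt_of_le h1 (hGF x0)
  have hclos : x0 ∈ closure {x : ℝ | QuickAt F 1 x} := hdense hFx0
  obtain ⟨x, hxs, hxq⟩ : (s ∩ {x : ℝ | QuickAt F 1 x}).Nonempty := by
    rw [mem_closure_iff_nhds] at hclos
    exact hclos s hmem
  refine ⟨x, hxs, hxq, ?_⟩
  obtain ⟨hGx, hFGx⟩ := hxs
  -- quantitative bounds
  have hFGval : (F - G) x = F x - G x := rfl
  have hA : fastLimsup (F - G) x ≤ ENNReal.ofReal (2 * Real.sqrt (F x - G x)) := by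
    have := fastLimsup_le_of_no_quick (F - G) hFGa x (by rw [hFGval]; exact hFGx)
    rwa [hFGval] at this
  have hB : fastLimsup F x ≤ fastLimsup G x + fastLimsup (F - G) x :=
    fastLimsup_le_add F G (F - G) (fun y => by simp) x
  have hC : ENNReal.ofReal (2 * Real.sqrt (F x)) ≤ fastLimsup F x := by
    have := hxq.1
    rwa [mul_one] at this
  -- c := 2√(F x) - 2√(F x - G x) > 0
  set c : ℝ := 2 * Real.sqrt (F x) - 2 * Real.sqrt (F x - G x) with hc
  have hsub : F x - G x < F x := by linarith
  have hcpos : 0 < c := by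
    have : Real.sqrt (F x - G x) < Real.sqrt (F x) :=
      Real.sqrt_lt_sqrt (le_of_lt hFGx) hsub
    simp only [hc]; linarith
  have hkey : ENNReal.ofReal c ≤ fastLimsup G x := by
    have hcomb : ENNReal.ofReal (2 * Real.sqrt (F x)) ≤
        fastLimsup G x + ENNReal.ofReal (2 * Real.sqrt (F x - G x)) :=
      hC.trans (hB.trans (add_le_add_right hA _))
    have : ENNReal.ofReal (2 * Real.sqrt (F x)) - ENNReal.ofReal (2 * Real.sqrt (F x - G x)) ≤
        fastLimsup G x := tsub_le_iff_right.mpr hcomb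
    rwa [← ENNReal.ofReal_sub _ (by positivity)] at this
  have hsG : 0 < Real.sqrt (G x) := Real.sqrt_pos.mpr hGx
  refine ⟨c / (2 * Real.sqrt (G x)), by positivity, ?_, ?_⟩
  · have heq : 2 * (c / (2 * Real.sqrt (G x))) * Real.sqrt (G x) = c := by
      field_simp
    rw [heq]
    exact hkey
  · have heq : 2 * (c / (2 * Real.sqrt (G x))) * Real.sqrt (G x) = c := by
      field_simp
    rw [heq]
    exact hcpos
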